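/- For every 0 ≤ k ≤ n−1 the function f_k is invariant under the coadjoint action of GL_n ⋉ (V ⊕ V*): f_k(gXg⁻¹, λg⁻¹, gv) = f_k(X,λ,v) for every invertible n×n matrix g, and f_k(X + wλ − vν, λ, v) = f_k(X,λ,v) for every column vector w ∈ V and row vector ν ∈ V* (here wλ and vν denote the rank-one n×n matrices obtained as column-times-row products). -/

import Mathlib

open Matrix Polynomial

/-- `Q X j` is defined by `det (t•I - X) = ∑ j, (-1)^j * Q j X * t^(n-j)`,
i.e. `Q X j = (-1)^j * (coefficient of t^(n-j) in the characteristic polynomial of X)`. -/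
noncomputable def QQ {R : Type*} [CommRing R] {n : ℕ} (X : Matrix (Fin n) (Fin n) R)
    (j : ℕ) : R :=
  (-1) ^ j * X.charpoly.coeff (n - j)

/-- `B X k = X^k - Q₁(X)•X^(k-1) + Q₂(X)•X^(k-2) - ⋯ + (-1)^k Q_k(X)•I`. -/
noncomputable def BB {R : Type*} [CommRing R] {n : ℕ} (X : Matrix (Fin n) (Fin n) R)
    (k : ℕ) : Matrix (Fin n) (Fin n) R :=
  ∑ i ∈ Finset.range (k + 1), ((-1) ^ i * QQ X i) • X ^ (k - i)

/-- `fdef X λ v k = λ ⬝ B_k(X) ⬝ v`. -/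
noncomputable def fdef {R : Type*} [CommRing R] {n : ℕ} (X : Matrix (Fin n) (Fin n) R)
    (l v : Fin n → R) (k : ℕ) : R :=
  l ⬝ᵥ (BB X k).mulVec v

section Aux

variable {R : Type*} [CommRing R] {n : ℕ}

lemma myDetUpd (A : Matrix (Fin n) (Fin n) R) (v w : Fin n → R) (i : Fin n) :
    ((A + vecMulVec v w).updateCol i v).det = (A.updateCol i v).det := by
  rw [← det_transpose, ← det_transpose (A.updateCol i v)]
  apply det_eq_of_forall_row_eq_smul_add_const (Function.update w i 0) i
    (Function.update_self i 0 w)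
  intro r s
  by_cases h : r = i <;>
    simp [h, updateCol_apply, vecMulVec_apply, Function.update_apply, mul_comm]

lemma adj_rankone (A : Matrix (Fin n) (Fin n) R) (v w : Fin n → R) :
    adjugate (A + vecMulVec v w) *ᵥ v = adjugate A *ᵥ v := by
  funext i
  rw [← cramer_eq_adjugate_mulVec, ← cramer_eq_adjugate_mulVec, cramer_apply, cramer_apply,
    myDetUpd]

lemma vecMulVec_transpose' (a b : Fin n → R) : (vecMulVec a b)ᵀ = vecMulVec b a := by
  ext i j; simp [vecMulVec_apply, mul_comm]

lemma adj_rankone_left (A : Matrix (Fin n) (Fin n) R) (l u : Fin n → R) :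
    l ᵥ* adjugate (A + vecMulVec u l) = l ᵥ* adjugate A := by
  have h := adj_rankone Aᵀ l u
  have e1 : A + vecMulVec u l = (Aᵀ + vecMulVec l u)ᵀ := by
    rw [transpose_add, transpose_transpose, vecMulVec_transpose']
  have e2 : A = Aᵀᵀ := (transpose_transpose A).symm
  rw [e1, ← adjugate_transpose, vecMul_transpose]
  rw [show (l ᵥ* A.adjugate) = Aᵀ.adjugate *ᵥ l by
    rw [e2, ← adjugate_transpose, vecMul_transpose, transpose_transpose]]
  exact h

noncomputable def NN (X : Matrix (Fin n) (Fin n) R) : (Matrix (Fin n) (Fin n) R)[X] :=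
  matPolyEquiv (adjugate (charmatrix X))

lemma NN_rel (M : Matrix (Fin n) (Fin n) R) (m : ℕ) :
    (NN M).coeff m = M * (NN M).coeff (m + 1) + ((M.charpoly.coeff (m + 1)) • 1 :
      Matrix (Fin n) (Fin n) R) := by
  have h0 : charmatrix M * adjugate (charmatrix M)
      = M.charpoly • (1 : Matrix (Fin n) (Fin n) R[X]) := by
    rw [mul_adjugate, Matrix.charpoly]
  have h1 := congrArg matPolyEquiv h0
  rw [_root_.map_mul, matPolyEquiv_charmatrix, matPolyEquiv_smul_one] at h1
  have h2 := congrArg (fun p => p.coeff (m + 1)) h1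
  simp only [sub_mul, coeff_sub, coeff_X_mul, coeff_C_mul, coeff_map] at h2
  rw [Algebra.algebraMap_eq_smul_one] at h2
  rw [← sub_eq_iff_eq_add'] at *
  exact h2.symm ▸ rfl

lemma NN_coeff_zero [Nontrivial R] (M : Matrix (Fin n) (Fin n) R) :
    ∀ d m, n ≤ m → (NN M).natDegree + 1 ≤ m + d → (NN M).coeff m = 0 := by
  intro d
  induction d with
  | zero => exact fun m _ hd => coeff_eq_zero_of_natDegree_lt (by omega)
  | succ d ih =>
    intro m hm hd
    rw [NN_rel, ih (m + 1) (by omega) (by omega),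
      coeff_eq_zero_of_natDegree_lt
        (by rw [Matrix.charpoly_natDegree_eq_dim, Fintype.card_fin]; omega)]
    simp

lemma coeff_QQ (X : Matrix (Fin n) (Fin n) R) (j : ℕ) :
    ((-1 : R) ^ j * QQ X j) = X.charpoly.coeff (n - j) := by
  rw [QQ, ← mul_assoc, ← pow_add, ← two_mul, pow_mul, neg_one_sq, one_pow, one_mul]

lemma BB_eq (X : Matrix (Fin n) (Fin n) R) (k : ℕ) :
    BB X k = ∑ i ∈ Finset.range (k + 1), (X.charpoly.coeff (n - i)) • X ^ (k - i) := by
  unfold BB; exact Finset.sum_congr rfl fun i _ => by rw [coeff_QQ]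

lemma BB_zero (X : Matrix (Fin n) (Fin n) R) : BB X 0 = (X.charpoly.coeff n) • 1 := by
  simp [BB_eq]

lemma BB_succ (X : Matrix (Fin n) (Fin n) R) (k : ℕ) :
    BB X (k + 1) = X * BB X k + (X.charpoly.coeff (n - (k + 1))) • 1 := by
  rw [BB_eq, BB_eq, Finset.sum_range_succ, Finset.mul_sum]
  congr 1
  · refine Finset.sum_congr rfl fun i hi => ?_
    rw [Finset.mem_range] at hi
    rw [mul_smul_comm, ← pow_succ']
    congr 2
    omega
  · rw [Nat.sub_self, pow_zero]

lemma NN_coeff_eq_BB [Nontrivial R] (M : Matrix (Fin n) (Fin n) R) (hn : 1 ≤ n) :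
    ∀ k, k ≤ n - 1 → (NN M).coeff (n - 1 - k) = BB M k := by
  intro k
  induction k with
  | zero =>
    intro _
    have h1 : n - 1 - 0 = n - 1 := rfl
    have h2 : n - 1 + 1 = n := by omega
    rw [h1, NN_rel, h2, NN_coeff_zero M ((NN M).natDegree + 1) n le_rfl (by omega),
      mul_zero, zero_add, BB_zero]
  | succ k ih =>
    intro hk
    have h2 : n - 1 - k = (n - 1 - (k + 1)) + 1 := by omega
    have h3 : n - 1 - k = n - (k + 1) := by omega
    rw [BB_succ, ← ih (by omega), NN_rel, ← h2, h3]

lemma dot_coeff (M : Matrix (Fin n) (Fin n) R[X]) (l v : Fin n → R) (m : ℕ) :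
    ((fun i => C (l i)) ⬝ᵥ (M *ᵥ fun i => C (v i))).coeff m
      = l ⬝ᵥ ((matPolyEquiv M).coeff m) *ᵥ v := by
  simp only [dotProduct, mulVec, finset_sum_coeff, coeff_C_mul, Finset.mul_sum,
    matPolyEquiv_coeff_apply, coeff_mul_C]

lemma fdef_eq_coeff [Nontrivial R] (X : Matrix (Fin n) (Fin n) R) (l v : Fin n → R)
    (hn : 1 ≤ n) (k : ℕ) (hk : k ≤ n - 1) :
    fdef X l v k
      = ((fun i => C (l i)) ⬝ᵥ ((adjugate (charmatrix X)) *ᵥ fun i => C (v i))).coeff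
          (n - 1 - k) := by
  rw [dot_coeff, ← NN, NN_coeff_eq_BB X hn k hk, fdef]

lemma map_vecMulVec (a b : Fin n → R) :
    (vecMulVec a b).map (C : R → R[X]) = vecMulVec (fun i => C (a i)) (fun i => C (b i)) := by
  ext i j; simp [vecMulVec_apply]

lemma charmatrix_add_sub (X : Matrix (Fin n) (Fin n) R) (w l v nu : Fin n → R) :
    charmatrix (X + vecMulVec w l - vecMulVec v nu)
      = (charmatrix X + vecMulVec (fun i => C (v i)) (fun i => C (nu i)))
        + vecMulVec (-fun i => C (w i)) (fun i => C (l i)) := by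
  apply Matrix.ext; intro i j
  simp only [charmatrix, Matrix.sub_apply, Matrix.add_apply, RingHom.mapMatrix_apply,
    Matrix.map_apply, Matrix.neg_apply, vecMulVec_apply, Pi.neg_apply, map_sub, map_add,
    _root_.map_mul]
  ring

lemma charmatrix_conj (G Gi X : Matrix (Fin n) (Fin n) R) (h1 : G * Gi = 1) :
    charmatrix (G * X * Gi) = G.map C * charmatrix X * Gi.map C := by
  have hd : (Matrix.scalar (Fin n) (Polynomial.X : R[X])) = (Polynomial.X : R[X]) • 1 := by
    rw [scalar_apply, smul_one_eq_diagonal]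
  simp only [charmatrix, RingHom.mapMatrix_apply]
  rw [Matrix.mul_sub, Matrix.sub_mul, hd, mul_smul_comm, smul_mul_assoc, Matrix.mul_one,
    ← Matrix.map_mul, h1, Matrix.map_one _ (map_zero C) (map_one C), Matrix.map_mul,
    Matrix.map_mul]

lemma charpoly_conj' (G Gi X : Matrix (Fin n) (Fin n) R) (h1 : G * Gi = 1) (h2 : Gi * G = 1) :
    (G * X * Gi).charpoly = X.charpoly := by
  rw [Matrix.charpoly, Matrix.charpoly, charmatrix_conj G Gi X h1, det_mul, det_mul,
    mul_comm, ← mul_assoc, ← det_mul, ← Matrix.map_mul, h2,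
    Matrix.map_one _ (map_zero C) (map_one C), det_one, one_mul]

lemma pow_conj (G Gi X : Matrix (Fin n) (Fin n) R) (h1 : G * Gi = 1) (h2 : Gi * G = 1) (m : ℕ) :
    (G * X * Gi) ^ m = G * X ^ m * Gi := by
  induction m with
  | zero => rw [pow_zero, pow_zero, Matrix.mul_one, h1]
  | succ m ih =>
    rw [pow_succ, ih, pow_succ, Matrix.mul_assoc (G * X ^ m) Gi (G * X * Gi),
      ← Matrix.mul_assoc Gi (G * X) Gi, ← Matrix.mul_assoc Gi G X, h2, Matrix.one_mul,
      ← Matrix.mul_assoc, ← Matrix.mul_assoc]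

lemma BB_conj (G Gi X : Matrix (Fin n) (Fin n) R) (h1 : G * Gi = 1) (h2 : Gi * G = 1) (k : ℕ) :
    BB (G * X * Gi) k = G * BB X k * Gi := by
  unfold BB QQ
  rw [charpoly_conj' G Gi X h1 h2, Finset.mul_sum, Finset.sum_mul]
  refine Finset.sum_congr rfl fun i _ => ?_
  rw [pow_conj G Gi X h1 h2, mul_smul_comm, smul_mul_assoc, Matrix.mul_assoc]

end Aux

/-- each `f_k` (`0 ≤ k ≤ n-1`) is invariant under the coadjoint action
of `GL_n ⋉ (V ⊕ V*)`. -/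
theorem stmt_2 {K : Type*} [Field K] {n : ℕ} (hn : 1 ≤ n) (k : ℕ) (hk : k ≤ n - 1)
    (X : Matrix (Fin n) (Fin n) K) (l v : Fin n → K) :
    (∀ g : GL (Fin n) K,
      fdef ((g : Matrix (Fin n) (Fin n) K) * X * ((g⁻¹ : GL (Fin n) K) : Matrix (Fin n) (Fin n) K))
        (vecMul l ((g⁻¹ : GL (Fin n) K) : Matrix (Fin n) (Fin n) K))
        (mulVec (g : Matrix (Fin n) (Fin n) K) v) k = fdef X l v k) ∧
    (∀ w nu : Fin n → K,
      fdef (X + vecMulVec w l - vecMulVec v nu) l v k = fdef X l v k) := by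
  constructor
  · intro g
    have h1 : (g : Matrix (Fin n) (Fin n) K) * ((g⁻¹ : GL (Fin n) K) : Matrix (Fin n) (Fin n) K)
        = 1 := by
      rw [← Units.val_mul, mul_inv_cancel, Units.val_one]
    have h2 : ((g⁻¹ : GL (Fin n) K) : Matrix (Fin n) (Fin n) K) * (g : Matrix (Fin n) (Fin n) K)
        = 1 := by
      rw [← Units.val_mul, inv_mul_cancel, Units.val_one]
    rw [fdef, fdef, BB_conj _ _ X h1 h2, mulVec_mulVec, Matrix.mul_assoc, Matrix.mul_assoc,
      h2, Matrix.mul_one, dotProduct_mulVec, vecMul_vecMul, ← Matrix.mul_assoc, h2,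
      Matrix.one_mul, ← dotProduct_mulVec]
  · intro w nu
    rw [fdef_eq_coeff _ l v hn k hk, fdef_eq_coeff X l v hn k hk]
    congr 1
    rw [charmatrix_add_sub]
    rw [dotProduct_mulVec, dotProduct_mulVec, adj_rankone_left, ← dotProduct_mulVec,
      ← dotProduct_mulVec, adj_rankone]
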